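/- Let ℜ₀ be a finite family of polytopes in ℝ^N satisfying (H1) and (H2), and let x₁, x₂, …, x_k be distinct points of E with 1 ≤ k < r_min. Then the following are equivalent: (i) conv(E \ {x₁,…,x_k}) = Ω_{ℜ₀}(d_k) for some direction d_k ∈ S (i.e. conv(E \ {x₁,…,x_k}) ∈ ℜ₁ = F(ℜ₀)); (ii) there exist d_k ∈ S and a d_k-compatible enumeration {x′_i}_{i=1}^R of E such that ⟨x′_1,d_k⟩ ≤ … ≤ ⟨x′_k,d_k⟩ < ⟨x′_{k+1},d_k⟩ = ⋯ = ⟨x′_{r_min},d_k⟩ ≤ … ≤ ⟨x′_R,d_k⟩ and {x₁,…,x_k} = {x′_1,…,x′_k}. -/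

import Mathlib

open scoped RealInnerProductSpace
open Set

noncomputable section

/-- The ambient Euclidean space `ℝ^N`. -/
abbrev Euc (N : ℕ) : Type := EuclideanSpace ℝ (Fin N)

/-- A polytope: a nonempty convex compact subset of `ℝ^N` with finitely many extreme points. -/
def IsPolytope {N : ℕ} (Ω : Set (Euc N)) : Prop :=
  Ω.Nonempty ∧ Convex ℝ Ω ∧ IsCompact Ω ∧ (Set.extremePoints ℝ Ω).Finite

/-- The unit sphere `S` of `ℝ^N`. -/
def sph (N : ℕ) : Set (Euc N) := Metric.sphere (0 : Euc N) 1

/-- `E(Ω,d)`: the set of `d`-active extreme points of `Ω`. -/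
def activeExt {N : ℕ} (Ω : Set (Euc N)) (d : Euc N) : Set (Euc N) :=
  {x ∈ Set.extremePoints ℝ Ω | ∀ y ∈ Ω, ⟪y, d⟫ ≤ ⟪x, d⟫}

/-- `Ω_ℜ(d) = conv (⋃_{Ω ∈ ℜ} E(Ω,d))`, the dual polytope of the family `ℜ` in direction `d`. -/
def dualPoly {N : ℕ} (ℛ : Set (Set (Euc N))) (d : Euc N) : Set (Euc N) :=
  convexHull ℝ (⋃ Ω ∈ ℛ, activeExt Ω d)

/-- The dual family `F(ℜ) = {Ω_ℜ(d) : d ∈ S}`. -/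
def dualFam {N : ℕ} (ℛ : Set (Set (Euc N))) : Set (Set (Euc N)) :=
  dualPoly ℛ '' sph N

/-- `E_ℜ`, the set of extreme points of all polytopes of the family `ℜ`. -/
def extFam {N : ℕ} (ℛ : Set (Set (Euc N))) : Set (Euc N) :=
  ⋃ Ω ∈ ℛ, Set.extremePoints ℝ Ω

/-- A `d`-compatible enumeration of a finite set `E` of cardinality `R`:
an enumeration `x 0, x 1, …, x (R-1)` of `E` with `⟪x 0, d⟫ ≤ ⟪x 1, d⟫ ≤ ⋯ ≤ ⟪x (R-1), d⟫`. -/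
def IsCompatEnum {N : ℕ} (E : Set (Euc N)) (R : ℕ) (d : Euc N) (x : ℕ → Euc N) : Prop :=
  Set.InjOn x (Set.Iio R) ∧ x '' (Set.Iio R) = E ∧
    ∀ i j : ℕ, i ≤ j → j < R → ⟪x i, d⟫ ≤ ⟪x j, d⟫

section Helpers

variable {V : Type*} [NormedAddCommGroup V] [InnerProductSpace ℝ V]

lemma my_mem_extremePoints_convexHull {A : Set V} {x : V} (hxA : x ∈ A)
    (h : x ∉ convexHull ℝ (A \ {x})) : x ∈ Set.extremePoints ℝ (convexHull ℝ A) := by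
  rw [mem_extremePoints_iff_forall_segment]
  refine ⟨subset_convexHull ℝ A hxA, ?_⟩
  intro y hy z hz hseg
  by_cases hA : (A \ {x}).Nonempty
  · have hA' : A = insert x (A \ {x}) := by
      rw [Set.insert_diff_singleton, Set.insert_eq_self.2 hxA]
    rw [hA', convexHull_insert hA] at hy hz
    rw [mem_convexJoin] at hy hz
    obtain ⟨x₁, hx₁, y', hy', hyseg⟩ := hy
    obtain ⟨x₂, hx₂, z', hz', hzseg⟩ := hz
    rw [mem_singleton_iff] at hx₁ hx₂
    rw [hx₁] at hyseg; rw [hx₂] at hzseg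
    obtain ⟨a, a', ha, ha', haa, hay⟩ := hyseg
    obtain ⟨b, b', hb, hb', hbb, hbz⟩ := hzseg
    obtain ⟨t, t', ht, ht', htt, htx⟩ := hseg
    set c := t * a' + t' * b' with hc
    have hc0 : 0 ≤ c := by positivity
    rcases eq_or_lt_of_le hc0 with hczero | hcpos
    · -- c = 0 : t*a' = 0 and t'*b' = 0
      have h1 : t * a' = 0 := by nlinarith
      have h2 : t' * b' = 0 := by nlinarith
      rcases eq_or_lt_of_le ht with ht0 | htpos
      · have ht'1 : t' = 1 := by linarith
        have hb'0 : b' = 0 := by rw [ht'1, one_mul] at h2; exact h2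
        have hb1 : b = 1 := by linarith
        right
        rw [← hbz, hb1, hb'0]
        simp
      · have ha'0 : a' = 0 := (mul_eq_zero.1 h1).resolve_left (ne_of_gt htpos)
        have ha1 : a = 1 := by linarith
        left
        rw [← hay, ha1, ha'0]
        simp
    · -- c > 0
      exfalso
      have hcne : c ≠ 0 := ne_of_gt hcpos
      have hw : (t * a' / c) • y' + (t' * b' / c) • z' ∈ convexHull ℝ (A \ {x}) := by
        apply (convex_convexHull ℝ (A \ {x})) hy' hz' (by positivity) (by positivity)
        field_simp
        exact hc.symm
      have hkey : c • x = (t * a') • y' + (t' * b') • z' := by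
        have h1 : x = t • (a • x + a' • y') + t' • (b • x + b' • z') := by
          rw [hay, hbz, htx]
        have h2 : (1 : ℝ) • x = (t * a + t' * b) • x + ((t * a') • y' + (t' * b') • z') := by
          calc (1 : ℝ) • x = t • (a • x + a' • y') + t' • (b • x + b' • z') := by
                rw [← h1, one_smul]
            _ = (t * a + t' * b) • x + ((t * a') • y' + (t' * b') • z') := by module
        have h3 : t * a + t' * b = 1 - c := by nlinarith
        rw [h3] at h2
        have h4 : (1 : ℝ) • x - (1 - c) • x = (t * a') • y' + (t' * b') • z' := by
          rw [h2]; module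
        rw [← h4]; module
      have heq2 : c • x = c • ((t * a' / c) • y' + (t' * b' / c) • z') := by
        rw [hkey, smul_add, smul_smul, smul_smul, mul_div_cancel₀ _ hcne,
          mul_div_cancel₀ _ hcne]
      exact h ((smul_right_injective V hcne heq2).symm ▸ hw)
  · have hAx : A = {x} := by
      apply subset_antisymm _ (singleton_subset_iff.2 hxA)
      intro a ha
      by_contra hax
      exact hA ⟨a, ha, hax⟩
    rw [hAx, convexHull_singleton] at hy
    left; exact hy

lemma my_ncard_Iio (n : ℕ) : (Set.Iio n).ncard = n := by
  rw [← Finset.coe_range, Set.ncard_coe_finset, Finset.card_range]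

lemma my_ncard_Ico (m n : ℕ) : (Set.Ico m n).ncard = n - m := by
  rw [← Finset.coe_Ico, Set.ncard_coe_finset, Nat.card_Ico]

lemma my_initialSeg {I : Set ℕ} {n R : ℕ} (hIR : I ⊆ Set.Iio R)
    (hdc : ∀ i j, i ≤ j → j ∈ I → i ∈ I) (hcard : I.ncard = n) : I = Set.Iio n := by
  have hfin : I.Finite := (Set.finite_Iio R).subset hIR
  apply subset_antisymm
  · intro j hj
    by_contra hjn
    rw [Set.mem_Iio, not_lt] at hjn
    have hsub : Set.Iio (j + 1) ⊆ I := fun i hi => hdc i j (Nat.lt_succ_iff.1 hi) hj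
    have : j + 1 ≤ n := by
      rw [← my_ncard_Iio (j + 1), ← hcard]
      exact Set.ncard_le_ncard hsub hfin
    omega
  · intro i hi
    rw [Set.mem_Iio] at hi
    by_contra hiI
    have hsub : I ⊆ Set.Iio i := by
      intro j hj
      rw [Set.mem_Iio]
      by_contra hji
      push_neg at hji
      exact hiI (hdc i j hji hj)
    have : n ≤ i := by
      rw [← hcard, ← my_ncard_Iio i]
      exact Set.ncard_le_ncard hsub (Set.finite_Iio i)
    omega

lemma my_hull_le {A : Set V} {d x : V} (h : ∀ y ∈ A, ⟪y, d⟫ ≤ ⟪x, d⟫) :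
    ∀ y ∈ convexHull ℝ A, ⟪y, d⟫ ≤ ⟪x, d⟫ := by
  have hlin : IsLinearMap ℝ (fun y : V => ⟪y, d⟫) :=
    ⟨fun a b => inner_add_left a b d, fun c y => real_inner_smul_left y d c⟩
  exact convexHull_min h (convex_halfSpace_le hlin _)

lemma my_ext_hull {E A : Set V} (H1 : ∀ x ∈ E, x ∉ convexHull ℝ (E \ {x}))
    (hA : A ⊆ E) : Set.extremePoints ℝ (convexHull ℝ A) = A := by
  apply subset_antisymm extremePoints_convexHull_subset
  intro x hx
  refine my_mem_extremePoints_convexHull hx (fun hmem => H1 x (hA hx) ?_)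
  exact convexHull_mono (Set.diff_subset_diff_left hA) hmem

lemma my_hull_inj {E A B : Set V} (H1 : ∀ x ∈ E, x ∉ convexHull ℝ (E \ {x}))
    (hA : A ⊆ E) (hB : B ⊆ E) (h : convexHull ℝ A = convexHull ℝ B) : A = B := by
  rw [← my_ext_hull H1 hA, ← my_ext_hull H1 hB, h]

end Helpers

lemma my_union_active {N : ℕ} {ℛ₀ : Set (Set (Euc N))}
    (hpoly : ∀ Ω ∈ ℛ₀, IsPolytope Ω)
    {E : Set (Euc N)} (hE : E = extFam ℛ₀) (hEfin : E.Finite)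
    {rmin : ℕ} (hrpos : 1 ≤ rmin)
    (hrlb : ∀ Ω ∈ ℛ₀, rmin ≤ (Ω ∩ E).ncard)
    (H1 : ∀ x ∈ E, x ∉ convexHull ℝ (E \ {x}))
    (H2 : ∀ A ⊆ E, A.ncard = rmin → convexHull ℝ A ∈ ℛ₀)
    (d : Euc N) :
    (⋃ Ω ∈ ℛ₀, activeExt Ω d)
      = {x ∈ E | rmin ≤ ({w ∈ E | ⟪w, d⟫ ≤ ⟪x, d⟫}).ncard} := by
  have hextE : ∀ Ω ∈ ℛ₀, Set.extremePoints ℝ Ω ⊆ E := by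
    intro Ω hΩ
    rw [hE]
    exact Set.subset_biUnion_of_mem hΩ
  have homega : ∀ Ω ∈ ℛ₀, Ω = convexHull ℝ (Set.extremePoints ℝ Ω) := by
    intro Ω hΩ
    obtain ⟨hne, hconv, hcomp, hfin⟩ := hpoly Ω hΩ
    have h1 := closure_convexHull_extremePoints hcomp hconv
    rw [(hfin.isCompact_convexHull ℝ).isClosed.closure_eq] at h1
    exact h1.symm
  have hinter : ∀ Ω ∈ ℛ₀, Ω ∩ E = Set.extremePoints ℝ Ω := by
    intro Ω hΩ
    apply subset_antisymm
    · rintro x ⟨hxΩ, hxE⟩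
      by_contra hxext
      apply H1 x hxE
      have hsub : Set.extremePoints ℝ Ω ⊆ E \ {x} := by
        intro y hy
        refine ⟨hextE Ω hΩ hy, ?_⟩
        intro hyx
        rw [Set.mem_singleton_iff] at hyx
        exact hxext (hyx ▸ hy)
      have hx' : x ∈ convexHull ℝ (Set.extremePoints ℝ Ω) := by
        rw [← homega Ω hΩ]; exact hxΩ
      exact convexHull_mono hsub hx'
    · intro x hx
      exact ⟨extremePoints_subset hx, hextE Ω hΩ hx⟩
  apply subset_antisymm
  · intro x hx
    rw [Set.mem_iUnion₂] at hx
    obtain ⟨Ω, hΩ, hxe, hmax⟩ := hx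
    refine ⟨hextE Ω hΩ hxe, ?_⟩
    have hsub : Set.extremePoints ℝ Ω ⊆ {w ∈ E | ⟪w, d⟫ ≤ ⟪x, d⟫} :=
      fun y hy => ⟨hextE Ω hΩ hy, hmax y (extremePoints_subset hy)⟩
    calc rmin ≤ (Ω ∩ E).ncard := hrlb Ω hΩ
      _ = (Set.extremePoints ℝ Ω).ncard := by rw [hinter Ω hΩ]
      _ ≤ _ := Set.ncard_le_ncard hsub (hEfin.subset (Set.sep_subset _ _))
  · rintro x ⟨hxE, hcard⟩
    set s := {w ∈ E | ⟪w, d⟫ ≤ ⟪x, d⟫} with hs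
    have hsfin : s.Finite := hEfin.subset (Set.sep_subset _ _)
    have hxs : x ∈ s := ⟨hxE, le_refl _⟩
    have h1 : rmin - 1 ≤ (s \ {x}).ncard := by
      rw [Set.ncard_diff_singleton_of_mem hxs]
      omega
    obtain ⟨t, hts, htcard⟩ := Set.exists_subset_card_eq h1
    have hxt : x ∉ t := fun hxt => (hts hxt).2 rfl
    have htfin : t.Finite := hsfin.subset (hts.trans Set.diff_subset)
    have htE : t ⊆ E := fun y hy => ((hts hy).1).1
    set A := insert x t with hA
    have hAcard : A.ncard = rmin := by
      rw [hA, Set.ncard_insert_of_notMem hxt htfin, htcard]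
      omega
    have hAE : A ⊆ E := by
      rw [hA, Set.insert_subset_iff]
      exact ⟨hxE, htE⟩
    have hΩA := H2 A hAE hAcard
    have hxext : x ∈ Set.extremePoints ℝ (convexHull ℝ A) := by
      rw [my_ext_hull H1 hAE]
      exact Set.mem_insert x t
    have hmax : ∀ y ∈ convexHull ℝ A, ⟪y, d⟫ ≤ ⟪x, d⟫ := by
      apply my_hull_le
      intro y hy
      rcases Set.mem_insert_iff.1 hy with h' | h'
      · rw [h']
      · exact ((hts h').1).2
    exact Set.mem_iUnion₂.2 ⟨convexHull ℝ A, hΩA, ⟨hxext, hmax⟩⟩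

/-- Proposition `carack`. Indices of the enumeration are 0-based:
the paper's `x′_1,…,x′_k` is `x' 0, …, x' (k-1)` here. -/
theorem smaller_hull_in_dual_iff {N : ℕ} (ℛ₀ : Set (Set (Euc N))) (hfin : ℛ₀.Finite)
    (hpoly : ∀ Ω ∈ ℛ₀, IsPolytope Ω)
    (E : Set (Euc N)) (hE : E = extFam ℛ₀) (R : ℕ) (hR : R = E.ncard)
    (rmin : ℕ) (hrmin : IsLeast {r : ℕ | ∃ Ω ∈ ℛ₀, r = (Ω ∩ E).ncard} rmin)
    (H1 : ∀ x ∈ E, x ∉ convexHull ℝ (E \ {x}))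
    (H2 : ∀ A ⊆ E, A.ncard = rmin → convexHull ℝ A ∈ ℛ₀)
    (k : ℕ) (hk1 : 1 ≤ k) (hk2 : k < rmin)
    (xs : Fin k → Euc N) (hxsinj : Function.Injective xs) (hxsE : ∀ j, xs j ∈ E) :
    (∃ dk ∈ sph N, convexHull ℝ (E \ Set.range xs) = dualPoly ℛ₀ dk) ↔
      (∃ dk ∈ sph N, ∃ x' : ℕ → Euc N, IsCompatEnum E R dk x' ∧
        (∀ j < k, ⟪x' j, dk⟫ < ⟪x' k, dk⟫) ∧
        (∀ j : ℕ, k ≤ j → j < rmin → ⟪x' j, dk⟫ = ⟪x' k, dk⟫) ∧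
        x' '' (Set.Iio k) = Set.range xs) := by
  have hEfin : E.Finite := by
    rw [hE]
    exact hfin.biUnion (fun Ω hΩ => (hpoly Ω hΩ).2.2.2)
  have hrpos : 1 ≤ rmin := le_trans hk1 (le_of_lt hk2)
  have hrlb : ∀ Ω ∈ ℛ₀, rmin ≤ (Ω ∩ E).ncard := fun Ω hΩ => hrmin.2 ⟨Ω, hΩ, rfl⟩
  have hrminR : rmin ≤ R := by
    obtain ⟨Ω, hΩ, hr⟩ := hrmin.1
    rw [hR, hr]
    exact Set.ncard_le_ncard Set.inter_subset_right hEfin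
  have hkR : k < R := lt_of_lt_of_le hk2 hrminR
  have hXE : Set.range xs ⊆ E := Set.range_subset_iff.2 hxsE
  have hXcard : (Set.range xs).ncard = k := by
    rw [← Nat.card_coe_set_eq, Nat.card_range_of_injective hxsinj,
      Nat.card_eq_fintype_card, Fintype.card_fin]
  have hUA := my_union_active hpoly hE hEfin hrpos hrlb H1 H2
  constructor
  · -- (i) → (ii)
    rintro ⟨d, hd, hhull⟩
    refine ⟨d, hd, ?_⟩
    have hsets : E \ Set.range xs
        = {x ∈ E | rmin ≤ ({w ∈ E | ⟪w, d⟫ ≤ ⟪x, d⟫}).ncard} := by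
      apply my_hull_inj H1 Set.diff_subset (Set.sep_subset _ _)
      rw [hhull]
      unfold dualPoly
      rw [hUA d]
    set X := Set.range xs with hX
    have keylt : ∀ p ∈ X, ∀ q ∈ E \ X, ⟪p, d⟫ < ⟪q, d⟫ := by
      intro p hp q hq
      have hpE : p ∈ E := hXE hp
      have hpn : ¬ rmin ≤ ({w ∈ E | ⟪w, d⟫ ≤ ⟪p, d⟫}).ncard := by
        intro hcon
        have : p ∈ E \ X := by rw [hsets]; exact ⟨hpE, hcon⟩
        exact this.2 hp
      have hqy : rmin ≤ ({w ∈ E | ⟪w, d⟫ ≤ ⟪q, d⟫}).ncard := by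
        rw [hsets] at hq
        exact hq.2
      by_contra hle
      push_neg at hle
      apply hpn
      refine le_trans hqy (Set.ncard_le_ncard ?_ (hEfin.subset (Set.sep_subset _ _)))
      exact fun w hw => ⟨hw.1, le_trans hw.2 hle⟩
    -- build the sorted enumeration
    classical
    set r : Euc N → Euc N → Prop :=
      fun a b => ⟪a, d⟫ < ⟪b, d⟫ ∨ (⟪a, d⟫ = ⟪b, d⟫ ∧ (a ∈ X ∨ b ∉ X)) with hr
    haveI : DecidableRel r := fun a b => Classical.dec _
    haveI hrtot : IsTotal (Euc N) r := by
      constructor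
      intro a b
      rcases lt_trichotomy (⟪a, d⟫ : ℝ) ⟪b, d⟫ with h | h | h
      · exact Or.inl (Or.inl h)
      · by_cases hb : a ∈ X
        · exact Or.inl (Or.inr ⟨h, Or.inl hb⟩)
        · exact Or.inr (Or.inr ⟨h.symm, Or.inr hb⟩)
      · exact Or.inr (Or.inl h)
    haveI hrtrans : IsTrans (Euc N) r := by
      constructor
      rintro a b c (hab | ⟨hab, hab'⟩) (hbc | ⟨hbc, hbc'⟩)
      · exact Or.inl (lt_trans hab hbc)
      · exact Or.inl (hbc ▸ hab)
      · exact Or.inl (hab ▸ hbc)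
      · refine Or.inr ⟨hab.trans hbc, ?_⟩
        rcases hab' with h | h
        · exact Or.inl h
        · rcases hbc' with h' | h'
          · exact absurd h' h
          · exact Or.inr h'
    haveI hrrefl : IsRefl (Euc N) r :=
      ⟨fun a => Or.inr ⟨rfl, (em (a ∈ X)).imp id id⟩⟩
    set l := List.insertionSort r hEfin.toFinset.toList with hl
    have hperm : l.Perm hEfin.toFinset.toList := List.perm_insertionSort r _
    have hsort : l.Pairwise r := List.pairwise_insertionSort r _
    have hnodup : l.Nodup := hperm.nodup_iff.2 (Finset.nodup_toList _)
    have hlen : l.length = R := by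
      rw [hperm.length_eq, Finset.length_toList, ← Set.ncard_eq_toFinset_card E hEfin, hR]
    have hmeml : ∀ a, a ∈ l ↔ a ∈ E := by
      intro a
      rw [hperm.mem_iff, Finset.mem_toList, Set.Finite.mem_toFinset]
    set x₀ := xs ⟨0, hk1⟩ with hx₀
    set x' : ℕ → Euc N := fun i => l.getD i x₀ with hx'
    have hget : ∀ i, i < R → ∀ (h : i < l.length), x' i = l[i] := by
      intro i hi h
      exact List.getD_eq_getElem l x₀ h
    have hgetE : ∀ i, i < R → x' i ∈ E := by
      intro i hi
      have h : i < l.length := by rw [hlen]; exact hi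
      rw [hget i hi h]
      exact (hmeml _).1 (List.getElem_mem h)
    have hinjOn : Set.InjOn x' (Set.Iio R) := by
      intro i hi j hj hij
      rw [Set.mem_Iio] at hi hj
      have hi' : i < l.length := by rw [hlen]; exact hi
      have hj' : j < l.length := by rw [hlen]; exact hj
      rw [hget i hi hi', hget j hj hj'] at hij
      have := (List.nodup_iff_injective_getElem.1 hnodup)
        (show (fun (p : Fin l.length) => l[(p : ℕ)]) ⟨i, hi'⟩
          = (fun (p : Fin l.length) => l[(p : ℕ)]) ⟨j, hj'⟩ from hij)
      exact congrArg Fin.val this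
    have himgR : x' '' (Set.Iio R) = E := by
      apply subset_antisymm
      · rintro a ⟨i, hi, rfl⟩
        exact hgetE i hi
      · intro a ha
        obtain ⟨i, hi, hieq⟩ := List.mem_iff_getElem.1 ((hmeml a).2 ha)
        have hiR : i < R := by rw [← hlen]; exact hi
        exact ⟨i, hiR, by rw [hget i hiR hi]; exact hieq⟩
    have hmono : ∀ i j : ℕ, i ≤ j → j < R → ⟪x' i, d⟫ ≤ ⟪x' j, d⟫ := by
      intro i j hij hjR
      rcases eq_or_lt_of_le hij with rfl | hlt
      · exact le_refl _
      · have hiR : i < R := lt_trans hlt hjR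
        have hi' : i < l.length := by rw [hlen]; exact hiR
        have hj' : j < l.length := by rw [hlen]; exact hjR
        have hrel := List.Pairwise.rel_get_of_lt hsort
          (a := ⟨i, hi'⟩) (b := ⟨j, hj'⟩) (by exact Fin.mk_lt_mk.2 hlt)
        rw [List.get_eq_getElem, List.get_eq_getElem] at hrel
        rw [hget i hiR hi', hget j hjR hj']
        rcases hrel with h | ⟨h, _⟩
        · exact le_of_lt h
        · exact le_of_eq h
    set I : Set ℕ := {i | i < R ∧ x' i ∈ X} with hI
    have hdc : ∀ i j, i ≤ j → j ∈ I → i ∈ I := by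
      intro i j hij hjI
      obtain ⟨hjR, hjX⟩ := hjI
      refine ⟨lt_of_le_of_lt hij hjR, ?_⟩
      rcases eq_or_lt_of_le hij with rfl | hlt
      · exact hjX
      · by_contra hiX
        have hiE : x' i ∈ E := hgetE i (lt_trans hlt hjR)
        have hklt := keylt (x' j) hjX (x' i) ⟨hiE, hiX⟩
        have hi' : i < l.length := by rw [hlen]; exact lt_trans hlt hjR
        have hj' : j < l.length := by rw [hlen]; exact hjR
        have hrel := List.Pairwise.rel_get_of_lt hsort
          (a := ⟨i, hi'⟩) (b := ⟨j, hj'⟩) (by exact Fin.mk_lt_mk.2 hlt)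
        rw [List.get_eq_getElem, List.get_eq_getElem,
          ← hget i (lt_trans hlt hjR) hi', ← hget j hjR hj'] at hrel
        rcases hrel with h | ⟨h, _⟩
        · linarith
        · linarith
    have hIsub : I ⊆ Set.Iio R := fun i hi => Set.mem_Iio.2 hi.1
    have hIcard : I.ncard = k := by
      have himg : x' '' I = X := by
        apply subset_antisymm
        · rintro a ⟨i, ⟨hiR, hiX⟩, rfl⟩
          exact hiX
        · intro p hp
          have hpE : p ∈ E := hXE hp
          obtain ⟨i, hi, rfl⟩ := himgR ▸ hpE
          exact ⟨i, ⟨hi, hp⟩, rfl⟩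
      rw [← hXcard, ← himg, Set.ncard_image_of_injOn (hinjOn.mono hIsub)]
    have hIeq : I = Set.Iio k := my_initialSeg hIsub hdc hIcard
    have hiffX : ∀ i, i < R → (x' i ∈ X ↔ i < k) := by
      intro i hiR
      constructor
      · intro h
        have : i ∈ I := ⟨hiR, h⟩
        rw [hIeq] at this
        exact this
      · intro h
        have : i ∈ I := by rw [hIeq]; exact h
        exact this.2
    have himgk : x' '' (Set.Iio k) = X := by
      apply subset_antisymm
      · rintro a ⟨i, hi, rfl⟩
        rw [Set.mem_Iio] at hi
        exact (hiffX i (lt_trans hi hkR)).2 hi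
      · intro p hp
        obtain ⟨i, hi, rfl⟩ := himgR ▸ (hXE hp)
        rw [Set.mem_Iio] at hi
        exact ⟨i, Set.mem_Iio.2 ((hiffX i hi).1 hp), rfl⟩
    have hxkE : x' k ∈ E := hgetE k hkR
    have hxkX : x' k ∉ X := fun h => absurd ((hiffX k hkR).1 h) (lt_irrefl k)
    have hltgoal : ∀ j < k, ⟪x' j, d⟫ < ⟪x' k, d⟫ := by
      intro j hj
      exact keylt (x' j) ((hiffX j (lt_trans hj hkR)).2 hj) (x' k) ⟨hxkE, hxkX⟩
    have heqgoal : ∀ j : ℕ, k ≤ j → j < rmin → ⟪x' j, d⟫ = ⟪x' k, d⟫ := by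
      intro j hkj hjr
      have hjR : j < R := lt_of_lt_of_le hjr hrminR
      apply le_antisymm _ (hmono k j hkj hjR)
      by_contra hgt
      push_neg at hgt
      set m := (⟪x' k, d⟫ : ℝ) with hm
      have hcard : rmin ≤ ({w ∈ E | ⟪w, d⟫ ≤ m}).ncard := by
        have : x' k ∈ E \ X := ⟨hxkE, hxkX⟩
        rw [hsets] at this
        exact this.2
      set T := {y ∈ E | y ∉ X ∧ ⟪y, d⟫ = m} with hT
      have hTsub : T ⊆ x' '' (Set.Ico k j) := by
        rintro y ⟨hyE, hyX, hym⟩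
        obtain ⟨i, hiR, rfl⟩ := himgR ▸ hyE
        rw [Set.mem_Iio] at hiR
        have hik : k ≤ i := by
          by_contra h
          push_neg at h
          exact hyX ((hiffX i hiR).2 h)
        have hij : i < j := by
          by_contra h
          push_neg at h
          have := hmono j i h hiR
          linarith
        exact ⟨i, Set.mem_Ico.2 ⟨hik, hij⟩, rfl⟩
      have hTcard : T.ncard ≤ j - k := by
        calc T.ncard ≤ (x' '' (Set.Ico k j)).ncard :=
              Set.ncard_le_ncard hTsub ((Set.finite_Ico k j).image _)
          _ ≤ (Set.Ico k j).ncard := Set.ncard_image_le (Set.finite_Ico k j)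
          _ = j - k := my_ncard_Ico k j
      have hssub : {w ∈ E | ⟪w, d⟫ ≤ m} ⊆ X ∪ T := by
        rintro w ⟨hwE, hwm⟩
        by_cases hwX : w ∈ X
        · exact Or.inl hwX
        · refine Or.inr ⟨hwE, hwX, ?_⟩
          obtain ⟨i, hiR, rfl⟩ := himgR ▸ hwE
          rw [Set.mem_Iio] at hiR
          have hik : k ≤ i := by
            by_contra h
            push_neg at h
            exact hwX ((hiffX i hiR).2 h)
          exact le_antisymm hwm (hmono k i hik hiR)
      have : rmin ≤ k + (j - k) := by
        calc rmin ≤ ({w ∈ E | ⟪w, d⟫ ≤ m}).ncard := hcard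
          _ ≤ (X ∪ T).ncard := Set.ncard_le_ncard hssub
              ((hEfin.subset hXE).union (hEfin.subset (Set.sep_subset _ _)))
          _ ≤ X.ncard + T.ncard := Set.ncard_union_le X T
          _ ≤ k + (j - k) := add_le_add (le_of_eq hXcard) hTcard
      omega
    exact ⟨x', ⟨hinjOn, himgR, hmono⟩, hltgoal, heqgoal, himgk⟩
  · -- (ii) → (i)
    rintro ⟨d, hd, x', ⟨hinjOn, himgR, hmono⟩, hlt, heq, himgk⟩
    refine ⟨d, hd, ?_⟩
    have hA : ∀ j, j < k → ({w ∈ E | ⟪w, d⟫ ≤ ⟪x' j, d⟫}).ncard < rmin := by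
      intro j hj
      have hsub : {w ∈ E | ⟪w, d⟫ ≤ ⟪x' j, d⟫} ⊆ x' '' (Set.Iio k) := by
        rintro w ⟨hwE, hwle⟩
        obtain ⟨i, hiR, rfl⟩ := himgR ▸ hwE
        rw [Set.mem_Iio] at hiR
        have hik : i < k := by
          by_contra h
          push_neg at h
          have h1 := hmono k i h hiR
          have h2 := hlt j hj
          linarith
        exact ⟨i, Set.mem_Iio.2 hik, rfl⟩
      calc ({w ∈ E | ⟪w, d⟫ ≤ ⟪x' j, d⟫}).ncard
          ≤ (x' '' (Set.Iio k)).ncard :=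
            Set.ncard_le_ncard hsub ((Set.finite_Iio k).image _)
        _ ≤ (Set.Iio k).ncard := Set.ncard_image_le (Set.finite_Iio k)
        _ = k := my_ncard_Iio k
        _ < rmin := hk2
    have hB : ∀ j, k ≤ j → j < R → rmin ≤ ({w ∈ E | ⟪w, d⟫ ≤ ⟪x' j, d⟫}).ncard := by
      intro j hkj hjR
      have hsub : x' '' (Set.Iio rmin) ⊆ {w ∈ E | ⟪w, d⟫ ≤ ⟪x' j, d⟫} := by
        rintro w ⟨i, hi, rfl⟩
        rw [Set.mem_Iio] at hi
        have hiR : i < R := lt_of_lt_of_le hi hrminR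
        refine ⟨himgR ▸ ⟨i, Set.mem_Iio.2 hiR, rfl⟩, ?_⟩
        rcases lt_or_ge i k with h | h
        · have h1 := hlt i h
          have h2 := hmono k j hkj hjR
          linarith
        · have h1 := heq i h hi
          have h2 := hmono k j hkj hjR
          linarith
      calc rmin = (Set.Iio rmin).ncard := (my_ncard_Iio rmin).symm
        _ = (x' '' (Set.Iio rmin)).ncard :=
            (Set.ncard_image_of_injOn (hinjOn.mono
              (fun i hi => Set.mem_Iio.2 (lt_of_lt_of_le (Set.mem_Iio.1 hi) hrminR)))).symm
        _ ≤ _ := Set.ncard_le_ncard hsub (hEfin.subset (Set.sep_subset _ _))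
    have hsets : E \ Set.range xs
        = {x ∈ E | rmin ≤ ({w ∈ E | ⟪w, d⟫ ≤ ⟪x, d⟫}).ncard} := by
      apply subset_antisymm
      · rintro w ⟨hwE, hwX⟩
        obtain ⟨i, hiR, rfl⟩ := himgR ▸ hwE
        rw [Set.mem_Iio] at hiR
        have hik : k ≤ i := by
          by_contra h
          push_neg at h
          exact hwX (himgk ▸ ⟨i, Set.mem_Iio.2 h, rfl⟩)
        exact ⟨hwE, hB i hik hiR⟩
      · rintro w ⟨hwE, hwcard⟩
        obtain ⟨i, hiR, rfl⟩ := himgR ▸ hwE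
        rw [Set.mem_Iio] at hiR
        have hik : k ≤ i := by
          by_contra h
          push_neg at h
          exact absurd hwcard (not_le.2 (hA i h))
        refine ⟨hwE, ?_⟩
        rw [← himgk]
        rintro ⟨i', hi', heq'⟩
        rw [Set.mem_Iio] at hi'
        have : i' = i := hinjOn (Set.mem_Iio.2 (lt_trans hi' hkR))
          (Set.mem_Iio.2 hiR) heq'
        omega
    unfold dualPoly
    rw [hUA d, ← hsets]
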